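/- arXiv:2302.09796 — 2 statements merged into one kernel-verified Lean document; each statement's English description precedes it below -/
import Mathlib

section
/- When the greedy algorithm (processing elements x_1, …, x_k of X in increasing weight order and adding x_i to S whenever rank(S ∪ {x_i}) > rank(S)) is run, x_i is included in S if and only if rank({x_1, …, x_i}) > rank({x_1, …, x_{i−1}}). -/
open Finset

/-- A matroid on a finite ground set `E`, given by its independence predicate. -/
structure FinMatroid (α : Type*) [DecidableEq α] where
  E : Finset α
  Indep : Finset α → Prop
  indep_subset_ground : ∀ ⦃S : Finset α⦄, Indep S → S ⊆ E
  indep_empty : Indep ∅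
  indep_mono : ∀ ⦃S T : Finset α⦄, Indep S → T ⊆ S → Indep T
  indep_exchange : ∀ ⦃S T : Finset α⦄, Indep S → Indep T → S.card < T.card →
    ∃ x ∈ T, x ∉ S ∧ Indep (insert x S)

variable {α : Type*} [DecidableEq α]

/-- The rank of a set `X`: the maximum cardinality of an independent subset of `X`. -/
noncomputable def FinMatroid.rank (M : FinMatroid α) (X : Finset α) : ℕ :=
  sSup {n : ℕ | ∃ S : Finset α, M.Indep S ∧ S ⊆ X ∧ S.card = n}


/-- The set chosen by the greedy algorithm after processing the first `i`
elements `x 0, …, x (i-1)` (in increasing weight order). -/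
noncomputable def greedySet (M : FinMatroid α) (x : ℕ → α) : ℕ → Finset α
  | 0 => ∅
  | i + 1 =>
      if M.rank (greedySet M x i) < M.rank (insert (x i) (greedySet M x i)) then
        insert (x i) (greedySet M x i)
      else greedySet M x i

namespace FinMatroid

variable (M : FinMatroid α)

lemma rank_set_nonempty (X : Finset α) :
    {n : ℕ | ∃ S : Finset α, M.Indep S ∧ S ⊆ X ∧ S.card = n}.Nonempty :=
  ⟨0, ∅, M.indep_empty, empty_subset _, card_empty⟩

lemma rank_set_bdd (X : Finset α) :
    BddAbove {n : ℕ | ∃ S : Finset α, M.Indep S ∧ S ⊆ X ∧ S.card = n} := by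
  refine ⟨X.card, ?_⟩
  rintro n ⟨S, -, hS, rfl⟩
  exact card_le_card hS

lemma card_le_rank {S X : Finset α} (hS : M.Indep S) (hX : S ⊆ X) :
    S.card ≤ M.rank X :=
  le_csSup (M.rank_set_bdd X) ⟨S, hS, hX, rfl⟩

lemma rank_le {X : Finset α} {n : ℕ}
    (h : ∀ S : Finset α, M.Indep S → S ⊆ X → S.card ≤ n) : M.rank X ≤ n := by
  apply csSup_le (M.rank_set_nonempty X)
  rintro m ⟨S, h1, h2, rfl⟩
  exact h S h1 h2

lemma exists_rank_eq (X : Finset α) :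
    ∃ S : Finset α, M.Indep S ∧ S ⊆ X ∧ S.card = M.rank X :=
  Nat.sSup_mem (M.rank_set_nonempty X) (M.rank_set_bdd X)

lemma rank_indep {S : Finset α} (h : M.Indep S) : M.rank S = S.card :=
  le_antisymm (M.rank_le fun _ _ hT => card_le_card hT)
    (M.card_le_rank h (Subset.refl S))

lemma rank_mono {X Y : Finset α} (h : X ⊆ Y) : M.rank X ≤ M.rank Y :=
  M.rank_le fun _ hS hSX => M.card_le_rank hS (hSX.trans h)

lemma rank_insert_le (a : α) (X : Finset α) :
    M.rank (insert a X) ≤ M.rank X + 1 := by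
  apply M.rank_le
  intro S hS hSX
  have h1 : S.erase a ⊆ X := by
    intro y hy
    rcases mem_erase.mp hy with ⟨hya, hyS⟩
    rcases mem_insert.mp (hSX hyS) with h | h
    · exact absurd h hya
    · exact h
  have h2 := M.card_le_rank (M.indep_mono hS (erase_subset a S)) h1
  have h3 : S ⊆ insert a (S.erase a) := subset_insert_iff.mpr (Subset.refl _)
  calc S.card ≤ (insert a (S.erase a)).card := card_le_card h3
    _ ≤ (S.erase a).card + 1 := card_insert_le _ _
    _ ≤ M.rank X + 1 := by omega

lemma indep_insert_iff {S : Finset α} (hS : M.Indep S) (a : α) :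
    M.rank S < M.rank (insert a S) ↔ a ∉ S ∧ M.Indep (insert a S) := by
  constructor
  · intro h
    have ha : a ∉ S := by
      intro haS
      rw [insert_eq_self.mpr haS] at h
      exact lt_irrefl _ h
    obtain ⟨T, hT, hTsub, hTcard⟩ := M.exists_rank_eq (insert a S)
    have h1 : S.card < T.card := by rw [hTcard]; rw [M.rank_indep hS] at h; exact h
    have h2 : (insert a S).card ≤ T.card := by
      have := card_insert_le a S
      omega
    have hTeq : T = insert a S := eq_of_subset_of_card_le hTsub h2
    exact ⟨ha, hTeq ▸ hT⟩
  · rintro ⟨ha, hins⟩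
    rw [M.rank_indep hS, M.rank_indep hins, card_insert_of_notMem ha]
    omega

lemma rank_insert_iff {S X : Finset α} (hS : M.Indep S) (hSX : S ⊆ X)
    (hcard : S.card = M.rank X) (a : α) :
    M.rank X < M.rank (insert a X) ↔ M.rank S < M.rank (insert a S) := by
  constructor
  · intro h
    obtain ⟨T, hT, hTsub, hTcard⟩ := M.exists_rank_eq (insert a X)
    have h1 : S.card < T.card := by omega
    obtain ⟨y, hyT, hyS, hyind⟩ := M.indep_exchange hS hT h1
    rcases mem_insert.mp (hTsub hyT) with rfl | hyX
    · exact (M.indep_insert_iff hS y).mpr ⟨hyS, hyind⟩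
    · exfalso
      have h2 : insert y S ⊆ X := insert_subset hyX hSX
      have h3 := M.card_le_rank hyind h2
      rw [card_insert_of_notMem hyS] at h3
      omega
  · intro h
    obtain ⟨ha, hins⟩ := (M.indep_insert_iff hS a).mp h
    have h2 : insert a S ⊆ insert a X := insert_subset_insert a hSX
    have h3 := M.card_le_rank hins h2
    rw [card_insert_of_notMem ha] at h3
    omega

lemma greedy_invariant (x : ℕ → α) (n : ℕ) :
    M.Indep (greedySet M x n) ∧ greedySet M x n ⊆ (range n).image x ∧
      (greedySet M x n).card = M.rank ((range n).image x) := by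
  induction n with
  | zero =>
    refine ⟨M.indep_empty, by simp [greedySet], ?_⟩
    simp [greedySet, M.rank_indep M.indep_empty]
  | succ n ih =>
    obtain ⟨hind, hsub, hcard⟩ := ih
    have hpre : (range (n + 1)).image x = insert (x n) ((range n).image x) := by
      rw [range_add_one, image_insert]
    have hdef : greedySet M x (n + 1) =
        if M.rank (greedySet M x n) < M.rank (insert (x n) (greedySet M x n)) then
          insert (x n) (greedySet M x n)
        else greedySet M x n := rfl
    rw [hdef]
    split_ifs with hc
    · obtain ⟨ha, hins⟩ := (M.indep_insert_iff hind (x n)).mp hc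
      have h2 := (M.rank_insert_iff hind hsub hcard (x n)).mpr hc
      have h3 := M.rank_insert_le (x n) ((range n).image x)
      refine ⟨hins, ?_, ?_⟩
      · rw [hpre]; exact insert_subset_insert _ hsub
      · rw [hpre, card_insert_of_notMem ha]
        omega
    · have h2 : ¬ (M.rank ((range n).image x) <
          M.rank (insert (x n) ((range n).image x))) := fun h =>
        hc ((M.rank_insert_iff hind hsub hcard (x n)).mp h)
      have h3 := M.rank_mono (subset_insert (x n) ((range n).image x))
      refine ⟨hind, ?_, ?_⟩
      · rw [hpre]; exact hsub.trans (subset_insert _ _)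
      · rw [hpre]; omega

lemma greedy_subset_succ (x : ℕ → α) (n : ℕ) :
    greedySet M x n ⊆ greedySet M x (n + 1) := by
  show greedySet M x n ⊆ (if _ then _ else _)
  split_ifs
  · exact subset_insert _ _
  · exact Subset.refl _

lemma greedy_succ_subset (x : ℕ → α) (n : ℕ) :
    greedySet M x (n + 1) ⊆ insert (x n) (greedySet M x n) := by
  show (if _ then _ else _) ⊆ insert (x n) (greedySet M x n)
  split_ifs
  · exact Subset.refl _
  · exact subset_insert _ _

end FinMatroid

/-- In the greedy algorithm, `x i` is included in the output iff adding it to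
the prefix `{x 0, …, x (i-1)}` increases the rank of the prefix. -/
theorem greedy_mem_iff (M : FinMatroid α) (w : α → ℝ) (x : ℕ → α) (k : ℕ)
    (hinj : ∀ i < k, ∀ j < k, x i = x j → i = j)
    (hmem : ∀ i < k, x i ∈ M.E)
    (hw : ∀ i j, i < j → j < k → w (x i) < w (x j))
    (i : ℕ) (hi : i < k) :
    x i ∈ greedySet M x k ↔
      M.rank ((Finset.range i).image x) <
        M.rank ((Finset.range (i + 1)).image x) := by
  obtain ⟨hind, hsub, hcard⟩ := M.greedy_invariant x i
  -- Step A: membership in `greedySet k` is the same as membership in `greedySet (i+1)`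
  have stepA : ∀ m, i + 1 ≤ m → m ≤ k → (x i ∈ greedySet M x m ↔ x i ∈ greedySet M x (i + 1)) := by
    intro m
    induction m with
    | zero => omega
    | succ m ihm =>
      intro hm hmk
      rcases Nat.lt_or_ge (i + 1) (m + 1) with hlt | hge
      · have him : i + 1 ≤ m := by omega
        constructor
        · intro h
          rcases mem_insert.mp (M.greedy_succ_subset x m h) with heq | h'
          · exact absurd (hinj i hi m (by omega) heq) (by omega)
          · exact (ihm him (by omega)).mp h'
        · intro h
          exact M.greedy_subset_succ x m ((ihm him (by omega)).mpr h)
      · have : i + 1 = m + 1 := by omega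
        rw [this]
  -- `x i` is not in the prefix
  have hxnot : x i ∉ greedySet M x i := by
    intro h
    rcases mem_image.mp (hsub h) with ⟨j, hj, hje⟩
    have hji : j < i := mem_range.mp hj
    exact absurd (hinj j (by omega) i hi hje) (by omega)
  -- Step B: membership in `greedySet (i+1)` iff the greedy condition holds
  have stepB : x i ∈ greedySet M x (i + 1) ↔
      M.rank (greedySet M x i) < M.rank (insert (x i) (greedySet M x i)) := by
    show x i ∈ (if _ then _ else _) ↔ _
    split_ifs with hc
    · simp [hc]
    · simp [hc, hxnot]
  -- Step C: the greedy condition iff the rank of the prefix increases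
  have hpre : (Finset.range (i + 1)).image x = insert (x i) ((Finset.range i).image x) := by
    rw [Finset.range_add_one, Finset.image_insert]
  rw [stepA k (by omega) (le_refl k), stepB, hpre]
  exact (M.rank_insert_iff hind hsub hcard (x i)).symm
end

section
/- Suppose the min-weight basis B of X contains x, and x is deleted from X. Then the min-weight basis of X \ {x} is either B \ {x} (if no y ∈ X \ (B ∪ {x}) makes (B \ {x}) ∪ {y} independent), or (B \ {x}) ∪ {y} where y is the minimum-weight element of X \ {x} such that (B \ {x}) ∪ {y} is independent; moreover in the latter case w(y) > w(x). -/
open Finset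

variable {α : Type*} [DecidableEq α]

/-- `S` is a basis of `X`: an independent subset of `X` of size `rank X`. -/
def FinMatroid.IsBasisOf (M : FinMatroid α) (S X : Finset α) : Prop :=
  M.Indep S ∧ S ⊆ X ∧ S.card = M.rank X

/-- `B` is the min-weight basis of `Z` with respect to the weights `w`. -/
def IsMinWeightBasis (M : FinMatroid α) (w : α → ℝ) (Z B : Finset α) : Prop :=
  M.IsBasisOf B Z ∧ ∀ B' : Finset α, M.IsBasisOf B' Z → ∑ x ∈ B, w x ≤ ∑ x ∈ B', w x


lemma rank_bddAbove (M : FinMatroid α) (X : Finset α) :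
    BddAbove {n : ℕ | ∃ S : Finset α, M.Indep S ∧ S ⊆ X ∧ S.card = n} := by
  refine ⟨X.card, ?_⟩
  rintro n ⟨S, -, hSX, rfl⟩
  exact card_le_card hSX

lemma card_le_rank (M : FinMatroid α) {S X : Finset α} (hS : M.Indep S) (hSX : S ⊆ X) :
    S.card ≤ M.rank X :=
  le_csSup (rank_bddAbove M X) ⟨S, hS, hSX, rfl⟩

lemma exists_isBasisOf (M : FinMatroid α) (X : Finset α) : ∃ B, M.IsBasisOf B X := by
  have hne : {n : ℕ | ∃ S : Finset α, M.Indep S ∧ S ⊆ X ∧ S.card = n}.Nonempty :=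
    ⟨0, ∅, M.indep_empty, empty_subset _, card_empty⟩
  obtain ⟨S, hS, hSX, hc⟩ := Nat.sSup_mem hne (rank_bddAbove M X)
  exact ⟨S, hS, hSX, hc⟩

lemma rank_mono (M : FinMatroid α) {X Y : Finset α} (h : X ⊆ Y) : M.rank X ≤ M.rank Y := by
  obtain ⟨B, hB⟩ := exists_isBasisOf M X
  calc M.rank X = B.card := hB.2.2.symm
  _ ≤ M.rank Y := card_le_rank M hB.1 (hB.2.1.trans h)

lemma augment (M : FinMatroid α) : ∀ (n : ℕ) (S T : Finset α), M.Indep S → M.Indep T →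
    T.card = S.card + n →
    ∃ S', M.Indep S' ∧ S ⊆ S' ∧ S' ⊆ S ∪ T ∧ S'.card = T.card := by
  intro n
  induction n with
  | zero => exact fun S T hS _ h => ⟨S, hS, Subset.rfl, subset_union_left, by omega⟩
  | succ n ih =>
    intro S T hS hT h
    obtain ⟨a, haT, haS, hind⟩ := M.indep_exchange hS hT (by omega)
    obtain ⟨S', h1, h2, h3, h4⟩ := ih (insert a S) T hind hT
      (by rw [card_insert_of_notMem haS]; omega)
    refine ⟨S', h1, (subset_insert a S).trans h2, ?_, h4⟩
    refine h3.trans ?_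
    intro b hb
    rcases mem_union.1 hb with hb | hb
    · rcases mem_insert.1 hb with rfl | hb
      · exact mem_union_right _ haT
      · exact mem_union_left _ hb
    · exact mem_union_right _ hb

lemma card_le_of_forall_insert_dep (M : FinMatroid α) {S T U : Finset α} (hS : M.Indep S)
    (hdep : ∀ a ∈ T, a ∉ S → ¬ M.Indep (insert a S)) (hU : M.Indep U) (hUsub : U ⊆ S ∪ T) :
    U.card ≤ S.card := by
  by_contra h
  push_neg at h
  obtain ⟨a, haU, haS, hind⟩ := M.indep_exchange hS hU h
  rcases mem_union.1 (hUsub haU) with h' | h'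
  · exact haS h'
  · exact hdep a h' haS hind

lemma exists_leftout {A S' : Finset α} {e : α} (heA : e ∉ A) (heS' : e ∈ S')
    (hsub : S' ⊆ insert e A) (hcard : S'.card = A.card) :
    ∃ f ∈ A, f ∉ S' ∧ S' = insert e (A.erase f) := by
  have h1 : S'.erase e ⊆ A := by
    intro a ha
    rcases mem_insert.1 (hsub (mem_of_mem_erase ha)) with rfl | h
    · exact absurd rfl (mem_erase.1 ha).1
    · exact h
  have hA1 : 1 ≤ A.card := by
    rw [← hcard]; exact card_pos.2 ⟨e, heS'⟩
  have hc : (A \ S'.erase e).card = 1 := by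
    rw [card_sdiff_of_subset h1, card_erase_of_mem heS', hcard]
    omega
  obtain ⟨f, hf⟩ := card_eq_one.1 hc
  have hfA : f ∈ A := by
    have : f ∈ A \ S'.erase e := hf ▸ mem_singleton_self f
    exact (mem_sdiff.1 this).1
  have hfS'e : f ∉ S'.erase e := by
    have : f ∈ A \ S'.erase e := hf ▸ mem_singleton_self f
    exact (mem_sdiff.1 this).2
  have hfe : f ≠ e := fun h => heA (h ▸ hfA)
  have hfS' : f ∉ S' := fun h => hfS'e (mem_erase.2 ⟨hfe, h⟩)
  refine ⟨f, hfA, hfS', ?_⟩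
  ext a
  simp only [mem_insert, mem_erase]
  constructor
  · intro ha
    rcases mem_insert.1 (hsub ha) with rfl | h
    · exact Or.inl rfl
    · exact Or.inr ⟨fun hh => hfS' (hh ▸ ha), h⟩
  · rintro (rfl | ⟨hane, haA⟩)
    · exact heS'
    · by_contra haS'
      have hmem : a ∈ A \ S'.erase e := mem_sdiff.2 ⟨haA, fun hh => haS' (mem_of_mem_erase hh)⟩
      rw [hf] at hmem
      exact hane (mem_singleton.1 hmem)

lemma mem_minweight_of_indep (M : FinMatroid α) {w : α → ℝ} (hw : Function.Injective w)
    {Z B : Finset α} (hB : IsMinWeightBasis M w Z B) {e : α} (heZ : e ∈ Z)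
    (hind : M.Indep (insert e (B.filter fun b => w b < w e))) : e ∈ B := by
  by_contra heB
  set F := B.filter (fun b => w b < w e) with hF
  have hFB : F ⊆ B := filter_subset _ _
  have heF : e ∉ F := fun h => heB (hFB h)
  have hBZ : B ⊆ Z := hB.1.2.1
  have hrank : B.card = M.rank Z := hB.1.2.2
  by_cases hfc : F.card = B.card
  · have hFeq : F = B := eq_of_subset_of_card_le hFB (le_of_eq hfc.symm)
    have hle : (insert e F).card ≤ M.rank Z :=
      card_le_rank M hind (insert_subset heZ (hFB.trans hBZ))
    rw [card_insert_of_notMem heF, hFeq] at hle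
    omega
  · have hlt : F.card < B.card := lt_of_le_of_ne (card_le_card hFB) hfc
    obtain ⟨S', h1, h2, h3, h4⟩ := augment M (B.card - (insert e F).card) (insert e F) B hind hB.1.1
      (by rw [card_insert_of_notMem heF]; omega)
    have hS'sub : S' ⊆ insert e B := by
      refine h3.trans ?_
      intro a ha
      rcases mem_union.1 ha with ha | ha
      · rcases mem_insert.1 ha with rfl | ha
        · exact mem_insert_self _ _
        · exact mem_insert_of_mem (hFB ha)
      · exact mem_insert_of_mem ha
    obtain ⟨f, hfB, hfS', hS'eq⟩ := exists_leftout heB (h2 (mem_insert_self _ _)) hS'sub h4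
    have hfF : f ∉ F := fun h => hfS' (h2 (mem_insert_of_mem h))
    have hef : w e < w f := by
      have h5 : ¬ (w f < w e) := fun h => hfF (mem_filter.2 ⟨hfB, h⟩)
      have h6 : f ≠ e := fun h => heB (h ▸ hfB)
      rcases lt_or_eq_of_le (not_lt.1 h5) with h | h
      · exact h
      · exact absurd (hw h).symm h6
    have hS'basis : M.IsBasisOf S' Z :=
      ⟨h1, hS'eq ▸ insert_subset heZ ((erase_subset _ _).trans hBZ), h4.trans hrank⟩
    have hsum := hB.2 S' hS'basis
    have hs2 : ∑ a ∈ S', w a = w e + (∑ a ∈ B, w a - w f) := by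
      rw [hS'eq, sum_insert (fun h => heB (mem_of_mem_erase h)), sum_erase_eq_sub hfB]
    linarith

lemma exists_minweight_basis (M : FinMatroid α) (w : α → ℝ) (Z : Finset α) :
    ∃ B, IsMinWeightBasis M w Z B := by
  classical
  obtain ⟨B0, hB0⟩ := exists_isBasisOf M Z
  have hne : (Z.powerset.filter (fun S => M.IsBasisOf S Z)).Nonempty :=
    ⟨B0, mem_filter.2 ⟨mem_powerset.2 hB0.2.1, hB0⟩⟩
  obtain ⟨Bm, hBm, hmin⟩ := Finset.exists_min_image _ (fun S => ∑ a ∈ S, w a) hne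
  exact ⟨Bm, (mem_filter.1 hBm).2,
    fun B' hB' => hmin B' (mem_filter.2 ⟨mem_powerset.2 hB'.2.1, hB'⟩)⟩

lemma swap_optimal (M : FinMatroid α) {w : α → ℝ} (hw : Function.Injective w)
    {Z A : Finset α} (hA : M.IsBasisOf A Z)
    (H : ∀ e ∈ Z, e ∉ A → ∀ f ∈ A, M.Indep (insert e (A.erase f)) → w f ≤ w e) :
    IsMinWeightBasis M w Z A := by
  obtain ⟨Bm, hBm⟩ := exists_minweight_basis M w Z
  suffices hAB : A = Bm by rw [hAB]; exact hBm
  by_contra hne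
  have hD : ((A \ Bm) ∪ (Bm \ A)).Nonempty := by
    rcases (A \ Bm).eq_empty_or_nonempty with h1 | h1
    · rcases (Bm \ A).eq_empty_or_nonempty with h2 | h2
      · exact absurd (Subset.antisymm (sdiff_eq_empty_iff_subset.1 h1)
          (sdiff_eq_empty_iff_subset.1 h2)) hne
      · obtain ⟨a, ha⟩ := h2; exact ⟨a, mem_union_right _ ha⟩
    · obtain ⟨a, ha⟩ := h1; exact ⟨a, mem_union_left _ ha⟩
  obtain ⟨e₀, he₀, hmin₀⟩ := Finset.exists_min_image _ w hD
  have hfilter : A.filter (fun a => w a < w e₀) = Bm.filter (fun a => w a < w e₀) := by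
    ext a
    simp only [mem_filter]
    constructor
    · rintro ⟨haA, hlt⟩
      refine ⟨?_, hlt⟩
      by_contra haBm
      exact absurd hlt (not_lt.2 (hmin₀ a (mem_union_left _ (mem_sdiff.2 ⟨haA, haBm⟩))))
    · rintro ⟨haBm, hlt⟩
      refine ⟨?_, hlt⟩
      by_contra haA
      exact absurd hlt (not_lt.2 (hmin₀ a (mem_union_right _ (mem_sdiff.2 ⟨haBm, haA⟩))))
  rcases mem_union.1 he₀ with h | h
  · obtain ⟨he₀A, he₀Bm⟩ := mem_sdiff.1 h
    refine he₀Bm ?_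
    apply mem_minweight_of_indep M hw hBm (hA.2.1 he₀A)
    rw [← hfilter]
    exact M.indep_mono hA.1 (insert_subset he₀A (filter_subset _ _))
  · obtain ⟨he₀Bm, he₀A⟩ := mem_sdiff.1 h
    have hFA : A.filter (fun a => w a < w e₀) ⊆ A := filter_subset _ _
    have he₀F : e₀ ∉ A.filter (fun a => w a < w e₀) := fun hh => he₀A (hFA hh)
    have he₀Z : e₀ ∈ Z := hBm.1.2.1 he₀Bm
    have hSind : M.Indep (insert e₀ (A.filter (fun a => w a < w e₀))) := by
      rw [hfilter]
      exact M.indep_mono hBm.1.1 (insert_subset he₀Bm (filter_subset _ _))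
    by_cases hfc : (A.filter (fun a => w a < w e₀)).card = A.card
    · have hFeq : A.filter (fun a => w a < w e₀) = A := eq_of_subset_of_card_le hFA (le_of_eq hfc.symm)
      have hle := card_le_rank M hSind (insert_subset he₀Z (hFA.trans hA.2.1))
      rw [card_insert_of_notMem he₀F, hFeq, ← hA.2.2] at hle
      omega
    · have hlt : (A.filter (fun a => w a < w e₀)).card < A.card := lt_of_le_of_ne (card_le_card hFA) hfc
      obtain ⟨S', h1, h2, h3, h4⟩ := augment M (A.card - (insert e₀ (A.filter (fun a => w a < w e₀))).card) (insert e₀ (A.filter (fun a => w a < w e₀))) A hSind hA.1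
        (by rw [card_insert_of_notMem he₀F]; omega)
      have hS'sub : S' ⊆ insert e₀ A := by
        refine h3.trans ?_
        intro a ha
        rcases mem_union.1 ha with ha | ha
        · rcases mem_insert.1 ha with rfl | ha
          · exact mem_insert_self _ _
          · exact mem_insert_of_mem (hFA ha)
        · exact mem_insert_of_mem ha
      obtain ⟨f, hfA, hfS', hS'eq⟩ := exists_leftout he₀A (h2 (mem_insert_self _ _)) hS'sub h4
      have hfF : f ∉ A.filter (fun a => w a < w e₀) := fun hh => hfS' (h2 (mem_insert_of_mem hh))
      have h5 : w e₀ ≤ w f := not_lt.1 (fun hh => hfF (mem_filter.2 ⟨hfA, hh⟩))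
      have h6 : w f ≤ w e₀ := H e₀ he₀Z he₀A f hfA (hS'eq ▸ h1)
      have hfe : f = e₀ := hw (le_antisymm h6 h5)
      exact he₀A (hfe ▸ hfA)

/-- Deleting an element `x` of the min-weight basis `B` of `X`: the new
min-weight basis of `X \ {x}` is `B \ {x}` if no replacement exists, and
otherwise `(B \ {x}) ∪ {y}` for the minimum-weight replacement `y`, which
moreover satisfies `w y > w x`. -/
theorem minweight_basis_delete (M : FinMatroid α) (w : α → ℝ)
    (hw : Function.Injective w) (X B : Finset α) (hXE : X ⊆ M.E)
    (hB : IsMinWeightBasis M w X B) (x : α) (hx : x ∈ B) :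
    ((¬ ∃ y ∈ X.erase x, y ∉ B ∧ M.Indep (insert y (B.erase x))) →
        IsMinWeightBasis M w (X.erase x) (B.erase x)) ∧
    (∀ y ∈ X.erase x, y ∉ B → M.Indep (insert y (B.erase x)) →
      (∀ z ∈ X.erase x, z ∉ B → M.Indep (insert z (B.erase x)) → w y ≤ w z) →
      IsMinWeightBasis M w (X.erase x) (insert y (B.erase x)) ∧ w x < w y) := by
  obtain ⟨⟨hBind, hBX, hBrank⟩, hBmin⟩ := hB
  have hr1 : 1 ≤ B.card := card_pos.2 ⟨x, hx⟩
  have hxX : x ∈ X := hBX hx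
  have hBxind : M.Indep (B.erase x) := M.indep_mono hBind (erase_subset _ _)
  have hBxsub : B.erase x ⊆ X.erase x := erase_subset_erase _ hBX
  have hBxcard : (B.erase x).card = B.card - 1 := card_erase_of_mem hx
  constructor
  · intro hno
    push_neg at hno
    have hge : B.card - 1 ≤ M.rank (X.erase x) := hBxcard ▸ card_le_rank M hBxind hBxsub
    have hle : M.rank (X.erase x) ≤ B.card - 1 := by
      by_contra hc
      push_neg at hc
      obtain ⟨S, hSind, hSsub, hScard⟩ := exists_isBasisOf M (X.erase x)
      obtain ⟨z, hzS, hzBx, hzind⟩ := M.indep_exchange hBxind hSind (by omega)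
      have hzXx := hSsub hzS
      have hzB : z ∉ B := fun h => hzBx (mem_erase.2 ⟨(mem_erase.1 hzXx).1, h⟩)
      exact hno z hzXx hzB hzind
    have hrk : M.rank (X.erase x) = B.card - 1 := le_antisymm hle hge
    refine ⟨⟨hBxind, hBxsub, by omega⟩, ?_⟩
    rintro A ⟨hAind, hAsub, hAcard⟩
    have hxA : x ∉ A := fun h => (mem_erase.1 (hAsub h)).1 rfl
    obtain ⟨z, hzB, hzA, hzind⟩ := M.indep_exchange hAind hBind (by omega)
    by_cases hzx : z = x
    · rw [hzx] at hzind hzA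
      have hbasis : M.IsBasisOf (insert x A) X :=
        ⟨hzind, insert_subset hxX (hAsub.trans (erase_subset _ _)), by
          rw [card_insert_of_notMem hzA]; omega⟩
      have hm := hBmin _ hbasis
      have hsum : ∑ a ∈ insert x A, w a = w x + ∑ a ∈ A, w a := sum_insert hzA
      have hsumB : ∑ a ∈ B.erase x, w a = ∑ a ∈ B, w a - w x := sum_erase_eq_sub hx
      linarith
    · exfalso
      have hzXx : z ∈ X.erase x := mem_erase.2 ⟨hzx, hBX hzB⟩
      have hle2 := card_le_rank M hzind (insert_subset hzXx hAsub)
      rw [card_insert_of_notMem hzA] at hle2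
      omega
  · intro y hyXx hyB hyind hymin
    have hyX : y ∈ X := mem_of_mem_erase hyXx
    have hyBx : y ∉ B.erase x := fun h => hyB (mem_of_mem_erase h)
    have hCcard : (insert y (B.erase x)).card = B.card := by
      rw [card_insert_of_notMem hyBx]; omega
    have hCsub' : insert y (B.erase x) ⊆ X.erase x := insert_subset hyXx hBxsub
    have hCsubX : insert y (B.erase x) ⊆ X := hCsub'.trans (erase_subset _ _)
    have hCbasisX : M.IsBasisOf (insert y (B.erase x)) X := ⟨hyind, hCsubX, hCcard.trans hBrank⟩
    have hrkle : M.rank (X.erase x) ≤ M.rank X := rank_mono M (erase_subset _ _)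
    have hrkge : B.card ≤ M.rank (X.erase x) := hCcard ▸ card_le_rank M hyind hCsub'
    have hCbasisX' : M.IsBasisOf (insert y (B.erase x)) (X.erase x) :=
      ⟨hyind, hCsub', by omega⟩
    have hsumC : ∑ a ∈ insert y (B.erase x), w a = w y + (∑ a ∈ B, w a - w x) := by
      rw [sum_insert hyBx, sum_erase_eq_sub hx]
    have hxy : w x < w y := by
      have h1 := hBmin _ hCbasisX
      have h2 : w x ≤ w y := by linarith
      rcases lt_or_eq_of_le h2 with h | h
      · exact h
      · exact absurd (hw h ▸ hx) hyB
    refine ⟨?_, hxy⟩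
    refine swap_optimal M hw hCbasisX' ?_
    intro e heZ heC f hfC hindep
    by_contra hlt
    push_neg at hlt
    have hex : e ≠ x := (mem_erase.1 heZ).1
    have heX : e ∈ X := mem_of_mem_erase heZ
    have heB : e ∉ B := fun h => heC (mem_insert_of_mem (mem_erase.2 ⟨hex, h⟩))
    have hey : e ≠ y := fun h => heC (h ▸ mem_insert_self _ _)
    rcases mem_insert.1 hfC with rfl | hfBx
    · rw [erase_insert hyBx] at hindep
      have := hymin e heZ heB hindep
      linarith
    · obtain ⟨hfx, hfB⟩ := mem_erase.1 hfBx
      have hfX : f ∈ X := hBX hfB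
      have h2r : 2 ≤ B.card := by
        have h1 : 1 ≤ (B.erase x).card := card_pos.2 ⟨f, hfBx⟩
        omega
      have D1 : ¬ M.Indep (insert e (B.erase f)) := by
        intro hd
        have heBf : e ∉ B.erase f := fun h => heB (mem_of_mem_erase h)
        have hbasis : M.IsBasisOf (insert e (B.erase f)) X :=
          ⟨hd, insert_subset heX ((erase_subset _ _).trans hBX), by
            rw [card_insert_of_notMem heBf, card_erase_of_mem hfB]; omega⟩
        have hm := hBmin _ hbasis
        have hs : ∑ a ∈ insert e (B.erase f), w a = w e + (∑ a ∈ B, w a - w f) := by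
          rw [sum_insert heBf, sum_erase_eq_sub hfB]
        linarith
      by_cases hbx : M.Indep (insert e (B.erase x))
      · have hyle : w y ≤ w e := hymin e heZ heB hbx
        have D2 : ¬ M.Indep (insert y (B.erase f)) := by
          intro hd
          have hyBf : y ∉ B.erase f := fun h => hyB (mem_of_mem_erase h)
          have hbasis : M.IsBasisOf (insert y (B.erase f)) X :=
            ⟨hd, insert_subset hyX ((erase_subset _ _).trans hBX), by
              rw [card_insert_of_notMem hyBf, card_erase_of_mem hfB]; omega⟩
          have hm := hBmin _ hbasis
          have hs : ∑ a ∈ insert y (B.erase f), w a = w y + (∑ a ∈ B, w a - w f) := by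
            rw [sum_insert hyBf, sum_erase_eq_sub hfB]
          linarith
        have hUsub : insert e ((insert y (B.erase x)).erase f) ⊆ (B.erase f) ∪ {y, e} := by
          intro a ha
          rcases mem_insert.1 ha with rfl | ha
          · exact mem_union_right _ (by simp)
          · obtain ⟨haf, haC⟩ := mem_erase.1 ha
            rcases mem_insert.1 haC with rfl | ha2
            · exact mem_union_right _ (by simp)
            · exact mem_union_left _ (mem_erase.2 ⟨haf, mem_of_mem_erase ha2⟩)
        have hdep : ∀ a ∈ ({y, e} : Finset α), a ∉ B.erase f →
            ¬ M.Indep (insert a (B.erase f)) := by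
          intro a ha _
          rcases mem_insert.1 ha with rfl | ha
          · exact D2
          · rw [mem_singleton.1 ha]; exact D1
        have hcardle := card_le_of_forall_insert_dep M
          (M.indep_mono hBind (erase_subset _ _)) hdep hindep hUsub
        have heCf : e ∉ (insert y (B.erase x)).erase f := fun h => heC (mem_of_mem_erase h)
        rw [card_insert_of_notMem heCf, card_erase_of_mem hfC, hCcard,
          card_erase_of_mem hfB] at hcardle
        omega
      · have hSsub : insert e ((B.erase x).erase f) ⊆
            insert e ((insert y (B.erase x)).erase f) := by
          intro a ha
          rcases mem_insert.1 ha with rfl | ha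
          · exact mem_insert_self _ _
          · obtain ⟨haf, haBx⟩ := mem_erase.1 ha
            exact mem_insert_of_mem (mem_erase.2 ⟨haf, mem_insert_of_mem haBx⟩)
        have hSind := M.indep_mono hindep hSsub
        have hdep : ∀ a ∈ B, a ∉ insert e ((B.erase x).erase f) →
            ¬ M.Indep (insert a (insert e ((B.erase x).erase f))) := by
          intro a haB haS
          have hax_or : a = x ∨ a = f := by
            by_contra hc
            push_neg at hc
            exact haS (mem_insert_of_mem (mem_erase.2 ⟨hc.2, mem_erase.2 ⟨hc.1, haB⟩⟩))
          rcases hax_or with rfl | rfl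
          · intro hd
            rw [Finset.insert_comm, erase_right_comm, insert_erase (mem_erase.2 ⟨Ne.symm hfx, hx⟩)] at hd
            exact D1 hd
          · intro hd
            rw [Finset.insert_comm, insert_erase hfBx] at hd
            exact hbx hd
        have hcardle := card_le_of_forall_insert_dep M hSind hdep hBind subset_union_right
        have heS : e ∉ (B.erase x).erase f := fun h => heB (mem_of_mem_erase (mem_of_mem_erase h))
        rw [card_insert_of_notMem heS, card_erase_of_mem hfBx, card_erase_of_mem hx] at hcardle
        omega
end
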